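/- For every countable Boolean algebra 𝔄 there exist a Boolean algebra 𝔅 and an injective map 𝔣 : 𝔄 → 𝔅 such that: (T.1) 𝔅 is generated as a Boolean algebra by 𝔣[𝔄] (in particular 𝔅 is countable); (T.2) for every finite subalgebra 𝔄' of 𝔄, the family 𝔣[atoms(𝔄')] is *-free in 𝔅; and (T.3) 𝔣(a ∨ b) = 𝔣(a) ∨ 𝔣(b) for all a, b ∈ 𝔄. -/

import Mathlib

/-- A finite indexed family `b₁, …, bₙ` in a Boolean algebra is *-free:
`b₁ ⊔ ⋯ ⊔ bₙ = ⊤` and for every nonempty `J ⊆ [n]`,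
`(⨅_{j∈J} b j) ⊓ (⨅_{j∉J} (b j)ᶜ) ≠ ⊥`. -/
def StarFree {B : Type*} [BooleanAlgebra B] {n : ℕ} (b : Fin n → B) : Prop :=
  Finset.univ.sup b = ⊤ ∧
    ∀ J : Finset (Fin n), J.Nonempty → J.inf b ⊓ Jᶜ.inf (fun i => (b i)ᶜ) ≠ ⊥

/-- `S` is a (Boolean) subalgebra of the Boolean algebra `A`. -/
def IsBoolSubalgebra {A : Type*} [BooleanAlgebra A] (S : Set A) : Prop :=
  ⊥ ∈ S ∧ ⊤ ∈ S ∧ (∀ x ∈ S, ∀ y ∈ S, x ⊔ y ∈ S) ∧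
    (∀ x ∈ S, ∀ y ∈ S, x ⊓ y ∈ S) ∧ (∀ x ∈ S, xᶜ ∈ S)

/-- The subalgebra of `A` generated by a set `G`. -/
def boolGenBy {A : Type*} [BooleanAlgebra A] (G : Set A) : Set A :=
  ⋂₀ {S : Set A | IsBoolSubalgebra S ∧ G ⊆ S}

/-- `x` is an atom of the subalgebra `S`. -/
def IsAtomIn {A : Type*} [BooleanAlgebra A] (S : Set A) (x : A) : Prop :=
  x ∈ S ∧ x ≠ ⊥ ∧ ∀ y ∈ S, y ≤ x → y = ⊥ ∨ y = x

section Helpers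

variable {β : Type*} [BooleanAlgebra β]

lemma mem_boolGenBy_iff {G : Set β} {x : β} :
    x ∈ boolGenBy G ↔ ∀ S : Set β, IsBoolSubalgebra S → G ⊆ S → x ∈ S := by
  simp [boolGenBy, Set.mem_sInter, Set.mem_setOf_eq, and_imp]

lemma subset_boolGenBy {G : Set β} : G ⊆ boolGenBy G :=
  fun _ hx => mem_boolGenBy_iff.2 fun _ _ hGS => hGS hx

lemma boolGenBy_subset {G S : Set β} (hS : IsBoolSubalgebra S) (h : G ⊆ S) :
    boolGenBy G ⊆ S :=
  fun _ hx => mem_boolGenBy_iff.1 hx S hS h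

lemma isBoolSubalgebra_boolGenBy (G : Set β) : IsBoolSubalgebra (boolGenBy G) :=
  ⟨mem_boolGenBy_iff.2 fun _ hS _ => hS.1,
   mem_boolGenBy_iff.2 fun _ hS _ => hS.2.1,
   fun _ hx _ hy => mem_boolGenBy_iff.2 fun S hS hG =>
     hS.2.2.1 _ (mem_boolGenBy_iff.1 hx S hS hG) _ (mem_boolGenBy_iff.1 hy S hS hG),
   fun _ hx _ hy => mem_boolGenBy_iff.2 fun S hS hG =>
     hS.2.2.2.1 _ (mem_boolGenBy_iff.1 hx S hS hG) _ (mem_boolGenBy_iff.1 hy S hS hG),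
   fun _ hx => mem_boolGenBy_iff.2 fun S hS hG =>
     hS.2.2.2.2 _ (mem_boolGenBy_iff.1 hx S hS hG)⟩

lemma boolGenBy_induction {G : Set β} {P : β → Prop}
    (mem : ∀ x ∈ G, P x) (bot : P ⊥) (top : P ⊤)
    (sup : ∀ x ∈ boolGenBy G, ∀ y ∈ boolGenBy G, P x → P y → P (x ⊔ y))
    (inf : ∀ x ∈ boolGenBy G, ∀ y ∈ boolGenBy G, P x → P y → P (x ⊓ y))
    (compl : ∀ x ∈ boolGenBy G, P x → P xᶜ) :
    ∀ x ∈ boolGenBy G, P x := by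
  have hgen := isBoolSubalgebra_boolGenBy G
  have hsub : IsBoolSubalgebra {x : β | x ∈ boolGenBy G ∧ P x} :=
    ⟨⟨hgen.1, bot⟩, ⟨hgen.2.1, top⟩,
     fun x hx y hy => ⟨hgen.2.2.1 _ hx.1 _ hy.1, sup x hx.1 y hy.1 hx.2 hy.2⟩,
     fun x hx y hy => ⟨hgen.2.2.2.1 _ hx.1 _ hy.1, inf x hx.1 y hy.1 hx.2 hy.2⟩,
     fun x hx => ⟨hgen.2.2.2.2 _ hx.1, compl x hx.1 hx.2⟩⟩
  intro x hx
  exact (boolGenBy_subset hsub (fun g hg => ⟨subset_boolGenBy hg, mem g hg⟩) hx).2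

/-! ### DNF representation, for countability of the generated subalgebra -/

private def dnfLit (u : ℕ → β) (p : ℕ × Bool) : β :=
  if p.2 then u p.1 else (u p.1)ᶜ

private def dnfConj (u : ℕ → β) (c : List (ℕ × Bool)) : β :=
  c.foldr (fun p t => dnfLit u p ⊓ t) ⊤

private def dnfForm (u : ℕ → β) (l : List (List (ℕ × Bool))) : β :=
  l.foldr (fun c s => dnfConj u c ⊔ s) ⊥

private lemma dnfConj_nil (u : ℕ → β) : dnfConj u [] = ⊤ := rfl
private lemma dnfConj_cons (u : ℕ → β) (p c) :
    dnfConj u (p :: c) = dnfLit u p ⊓ dnfConj u c := rfl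
private lemma dnfForm_nil (u : ℕ → β) : dnfForm u [] = ⊥ := rfl
private lemma dnfForm_cons (u : ℕ → β) (c l) :
    dnfForm u (c :: l) = dnfConj u c ⊔ dnfForm u l := rfl

private lemma dnfConj_append (u : ℕ → β) (c d) :
    dnfConj u (c ++ d) = dnfConj u c ⊓ dnfConj u d := by
  induction c with
  | nil => simp [dnfConj_nil]
  | cons p c ih => simp [dnfConj_cons, ih, inf_assoc]

private lemma dnfForm_append (u : ℕ → β) (l m) :
    dnfForm u (l ++ m) = dnfForm u l ⊔ dnfForm u m := by
  induction l with
  | nil => simp [dnfForm_nil]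
  | cons c l ih => simp [dnfForm_cons, ih, sup_assoc]

private lemma dnfConj_inf_dnfForm (u : ℕ → β) (c m) :
    dnfConj u c ⊓ dnfForm u m = dnfForm u (m.map (fun d => c ++ d)) := by
  induction m with
  | nil => simp [dnfForm_nil]
  | cons d m ih =>
    simp only [List.map_cons, dnfForm_cons, inf_sup_left, ih, dnfConj_append]

private lemma dnfForm_inf (u : ℕ → β) (l m) :
    ∃ k, dnfForm u l ⊓ dnfForm u m = dnfForm u k := by
  induction l with
  | nil => exact ⟨[], by simp [dnfForm_nil]⟩
  | cons c l ih =>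
    obtain ⟨k, hk⟩ := ih
    refine ⟨m.map (fun d => c ++ d) ++ k, ?_⟩
    rw [dnfForm_cons, inf_sup_right, dnfConj_inf_dnfForm, hk, dnfForm_append]

private lemma dnfConj_compl (u : ℕ → β) (c) :
    (dnfConj u c)ᶜ = dnfForm u (c.map fun p => [(p.1, !p.2)]) := by
  induction c with
  | nil => simp [dnfConj_nil, dnfForm_nil]
  | cons p c ih =>
    rw [dnfConj_cons, compl_inf, List.map_cons, dnfForm_cons, ih]
    congr 1
    show (dnfLit u p)ᶜ = dnfLit u (p.1, !p.2) ⊓ ⊤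
    rcases p with ⟨n, b⟩
    cases b <;> simp [dnfLit]

private lemma dnfForm_compl (u : ℕ → β) (l) :
    ∃ k, (dnfForm u l)ᶜ = dnfForm u k := by
  induction l with
  | nil => exact ⟨[[]], by simp [dnfForm_nil, dnfForm_cons, dnfConj_nil]⟩
  | cons c l ih =>
    obtain ⟨k, hk⟩ := ih
    obtain ⟨k', hk'⟩ := dnfForm_inf u (c.map fun p => [(p.1, !p.2)]) k
    exact ⟨k', by rw [dnfForm_cons, compl_sup, dnfConj_compl, hk, hk']⟩

private lemma countable_boolGenBy_range (u : ℕ → β) :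
    (boolGenBy (Set.range u)).Countable := by
  have hsubalg : IsBoolSubalgebra (Set.range (dnfForm u)) := by
    refine ⟨⟨[], rfl⟩, ⟨[[]], by simp [dnfForm_cons, dnfForm_nil, dnfConj_nil]⟩, ?_, ?_, ?_⟩
    · rintro _ ⟨l, rfl⟩ _ ⟨m, rfl⟩
      exact ⟨l ++ m, dnfForm_append u l m⟩
    · rintro _ ⟨l, rfl⟩ _ ⟨m, rfl⟩
      obtain ⟨k, hk⟩ := dnfForm_inf u l m
      exact ⟨k, hk.symm⟩
    · rintro _ ⟨l, rfl⟩
      obtain ⟨k, hk⟩ := dnfForm_compl u l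
      exact ⟨k, hk.symm⟩
  have hgen : Set.range u ⊆ Set.range (dnfForm u) := by
    rintro _ ⟨n, rfl⟩
    exact ⟨[[(n, true)]], by simp [dnfForm_cons, dnfForm_nil, dnfConj_cons, dnfConj_nil, dnfLit]⟩
  exact (Set.countable_range (dnfForm u)).mono (boolGenBy_subset hsubalg hgen)

lemma countable_boolGenBy {G : Set β} (hG : G.Countable) :
    (boolGenBy G).Countable := by
  rcases G.eq_empty_or_nonempty with rfl | hne
  · have h := countable_boolGenBy_range (fun _ : ℕ => (⊥ : β))
    refine h.mono (fun x hx => mem_boolGenBy_iff.2 fun S hS hGS => ?_)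
    exact mem_boolGenBy_iff.1 hx S hS (by simp)
  · obtain ⟨u, rfl⟩ := hG.exists_eq_range hne
    exact countable_boolGenBy_range u

/-! ### Atoms of a finite subalgebra -/

lemma atomIn_of_range {S : Set β} {n : ℕ} {e : Fin n → β}
    (hre : Set.range e = {x : β | IsAtomIn S x}) (i : Fin n) : IsAtomIn S (e i) := by
  have : e i ∈ Set.range e := Set.mem_range_self i
  rwa [hre] at this

lemma sup_atoms_eq_top {S : Set β} (hS : IsBoolSubalgebra S) (hfin : S.Finite)
    {n : ℕ} {e : Fin n → β} (hre : Set.range e = {x : β | IsAtomIn S x}) :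
    Finset.univ.sup e = ⊤ := by
  by_contra hne
  set t := Finset.univ.sup e with ht
  have htS : ∀ s : Finset (Fin n), s.sup e ∈ S := by
    intro s
    induction s using Finset.cons_induction with
    | empty => simpa using hS.1
    | cons i s hi ih =>
      rw [Finset.sup_cons]
      exact hS.2.2.1 _ (atomIn_of_range hre i).1 _ ih
  have hcne : tᶜ ≠ ⊥ := fun h => hne (compl_eq_bot.1 h)
  set M : Set β := {y | y ∈ S ∧ y ≠ ⊥ ∧ y ≤ tᶜ} with hM
  have hMfin : M.Finite := hfin.subset (fun y hy => hy.1)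
  have hMne : M.Nonempty := ⟨tᶜ, hS.2.2.2.2 _ (htS _), hcne, le_rfl⟩
  obtain ⟨m, hmM, hmin'⟩ := hMfin.exists_minimal hMne
  have hmin : ∀ y ∈ M, id y ≤ id m → m = y := fun y hy hle => le_antisymm (hmin' hy hle) hle
  have hatom : IsAtomIn S m := by
    refine ⟨hmM.1, hmM.2.1, fun y hyS hyle => ?_⟩
    by_cases hy : y = ⊥
    · exact Or.inl hy
    · exact Or.inr ((hmin y ⟨hyS, hy, hyle.trans hmM.2.2⟩ hyle).symm)
  have : m ∈ Set.range e := by rw [hre]; exact hatom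
  obtain ⟨i, rfl⟩ := this
  have h1 : e i ≤ t := Finset.le_sup (Finset.mem_univ i)
  have h2 : e i ≤ t ⊓ tᶜ := le_inf h1 hmM.2.2
  rw [inf_compl_eq_bot] at h2
  exact hmM.2.1 (le_bot_iff.1 h2)

lemma atoms_disjoint {S : Set β} (hS : IsBoolSubalgebra S)
    {n : ℕ} {e : Fin n → β} (he : Function.Injective e)
    (hre : Set.range e = {x : β | IsAtomIn S x}) {i j : Fin n} (hij : i ≠ j) :
    e i ⊓ e j = ⊥ := by
  have hai := atomIn_of_range hre i
  have haj := atomIn_of_range hre j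
  have hmem : e i ⊓ e j ∈ S := hS.2.2.2.1 _ hai.1 _ haj.1
  rcases haj.2.2 _ hmem inf_le_right with h | h
  · exact h
  · have hle : e j ≤ e i := h ▸ inf_le_left
    rcases hai.2.2 _ haj.1 hle with h' | h'
    · exact absurd h' haj.2.1
    · exact absurd (he h') (Ne.symm hij)

end Helpers

/-! ### The generated subalgebra, as a Boolean algebra -/

abbrev SubAlg {β : Type u} [BooleanAlgebra β] (G : Set β) : Type u :=
  {x : β // x ∈ boolGenBy G}

namespace SubAlg

variable {β : Type*} [BooleanAlgebra β] {G : Set β}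

private lemma hsub : IsBoolSubalgebra (boolGenBy G) := isBoolSubalgebra_boolGenBy G

instance : Max (SubAlg G) := ⟨fun x y => ⟨x.1 ⊔ y.1, hsub.2.2.1 _ x.2 _ y.2⟩⟩
instance : Min (SubAlg G) := ⟨fun x y => ⟨x.1 ⊓ y.1, hsub.2.2.2.1 _ x.2 _ y.2⟩⟩
instance : Top (SubAlg G) := ⟨⟨⊤, hsub.2.1⟩⟩
instance : Bot (SubAlg G) := ⟨⟨⊥, hsub.1⟩⟩
instance : Compl (SubAlg G) := ⟨fun x => ⟨x.1ᶜ, hsub.2.2.2.2 _ x.2⟩⟩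
instance : SDiff (SubAlg G) := ⟨fun x y => x ⊓ yᶜ⟩
instance : HImp (SubAlg G) := ⟨fun x y => y ⊔ xᶜ⟩

lemma val_injective : Function.Injective (Subtype.val : SubAlg G → β) :=
  Subtype.val_injective

@[simp] lemma val_sup (x y : SubAlg G) : (x ⊔ y).val = x.val ⊔ y.val := rfl
@[simp] lemma val_inf (x y : SubAlg G) : (x ⊓ y).val = x.val ⊓ y.val := rfl
@[simp] lemma val_top : (⊤ : SubAlg G).val = ⊤ := rfl
@[simp] lemma val_bot : (⊥ : SubAlg G).val = ⊥ := rfl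
@[simp] lemma val_compl (x : SubAlg G) : (xᶜ).val = (x.val)ᶜ := rfl

instance : BooleanAlgebra (SubAlg G) :=
  Function.Injective.booleanAlgebra Subtype.val val_injective Iff.rfl Iff.rfl
    (fun _ _ => rfl) (fun _ _ => rfl) rfl rfl (fun _ => rfl)
    (fun _ _ => sdiff_eq.symm) (fun _ _ => himp_eq.symm)

lemma val_finset_sup {ι : Type*} (s : Finset ι) (g : ι → SubAlg G) :
    (s.sup g).val = s.sup (fun i => (g i).val) := by
  induction s using Finset.cons_induction with
  | empty => simp
  | cons i s hi ih => simp [Finset.sup_cons, ih]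

lemma val_finset_inf {ι : Type*} (s : Finset ι) (g : ι → SubAlg G) :
    (s.inf g).val = s.inf (fun i => (g i).val) := by
  induction s using Finset.cons_induction with
  | empty => simp
  | cons i s hi ih => simp [Finset.inf_cons, ih]

end SubAlg

/-- For every countable Boolean algebra `𝔄` there are a Boolean algebra
`𝔅` and an injective map `𝔣 : 𝔄 → 𝔅` such that (T.1) `𝔅` is generated by `𝔣[𝔄]`
(in particular `𝔅` is countable), (T.2) for every finite subalgebra `𝔄'` of `𝔄` the family
`𝔣[atoms 𝔄']` is *-free in `𝔅`, and (T.3) `𝔣(a ⊔ b) = 𝔣(a) ⊔ 𝔣(b)`. -/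
theorem statement13 (A : Type*) [BooleanAlgebra A] [Countable A] :
    ∃ (B : Type) (_ : BooleanAlgebra B) (f : A → B),
      Function.Injective f ∧
      boolGenBy (Set.range f) = Set.univ ∧
      Countable B ∧
      (∀ S : Set A, IsBoolSubalgebra S → S.Finite →
        ∀ (n : ℕ) (e : Fin n → A), Function.Injective e →
          Set.range e = {x : A | IsAtomIn S x} → StarFree (fun i => f (e i))) ∧
      (∀ a b : A, f (a ⊔ b) = f a ⊔ f b) := by
  have : Nonempty A := ⟨⊥⟩
  obtain ⟨ρ, hρ⟩ := exists_surjective_nat A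
  -- the "points": indices of nonzero elements
  let X : Type := {k : ℕ // ρ k ≠ ⊥}
  -- the basic map into sets of points
  let f₀ : A → Set X := fun a => {k : X | ρ k.1 ⊓ a ≠ ⊥}
  have hf₀mem : ∀ (a : A) (k : X), k ∈ f₀ a ↔ ρ k.1 ⊓ a ≠ ⊥ := fun _ _ => Iff.rfl
  let G : Set (Set X) := Set.range f₀
  let B : Type := SubAlg G
  let f : A → B := fun a => ⟨f₀ a, subset_boolGenBy ⟨a, rfl⟩⟩
  have hval : ∀ a : A, (f a).val = f₀ a := fun _ => rfl
  -- f₀ reflects order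
  have key : ∀ a b : A, f₀ a ⊆ f₀ b → a ≤ b := by
    intro a b h
    by_contra hab
    have hx : a ⊓ bᶜ ≠ ⊥ := by
      intro h0
      exact hab (sdiff_eq_bot_iff.1 (by rwa [sdiff_eq]))
    obtain ⟨k, hk⟩ := hρ (a ⊓ bᶜ)
    have hkX : ρ k ≠ ⊥ := by rw [hk]; exact hx
    have hmema : (⟨k, hkX⟩ : X) ∈ f₀ a := by
      show ρ k ⊓ a ≠ ⊥
      rw [hk, inf_assoc, inf_comm bᶜ a, ← inf_assoc, inf_idem]
      exact hx
    have hmemb := h hmema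
    rw [hf₀mem, hk, inf_assoc, compl_inf_eq_bot, inf_bot_eq] at hmemb
    exact hmemb rfl
  refine ⟨B, inferInstance, f, ?_, ?_, ?_, ?_, ?_⟩
  · -- injectivity
    intro a b hab
    have h : f₀ a = f₀ b := congrArg Subtype.val hab
    exact le_antisymm (key a b h.le) (key b a h.ge)
  · -- generation
    apply Set.eq_univ_iff_forall.2
    intro b
    have hT := isBoolSubalgebra_boolGenBy (Set.range f)
    have main : ∀ x ∈ boolGenBy G,
        (∀ h : x ∈ boolGenBy G, (⟨x, h⟩ : B) ∈ boolGenBy (Set.range f)) := by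
      refine boolGenBy_induction ?_ ?_ ?_ ?_ ?_ ?_
      · rintro _ ⟨a, rfl⟩ h
        exact subset_boolGenBy (Set.mem_range_self a)
      · intro h
        have : (⟨⊥, h⟩ : B) = ⊥ := rfl
        rw [this]; exact hT.1
      · intro h
        have : (⟨⊤, h⟩ : B) = ⊤ := rfl
        rw [this]; exact hT.2.1
      · intro x hx y hy px py h
        have : (⟨x ⊔ y, h⟩ : B) = ⟨x, hx⟩ ⊔ ⟨y, hy⟩ := rfl
        rw [this]; exact hT.2.2.1 _ (px hx) _ (py hy)
      · intro x hx y hy px py h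
        have : (⟨x ⊓ y, h⟩ : B) = ⟨x, hx⟩ ⊓ ⟨y, hy⟩ := rfl
        rw [this]; exact hT.2.2.2.1 _ (px hx) _ (py hy)
      · intro x hx px h
        have : (⟨xᶜ, h⟩ : B) = (⟨x, hx⟩ : B)ᶜ := rfl
        rw [this]
        exact hT.2.2.2.2 _ (px hx)
    exact main b.1 b.2 b.2
  · -- countability
    exact (countable_boolGenBy (Set.countable_range f₀)).to_subtype
  · -- *-freeness
    intro S hS hfin n e he hre
    have hat : ∀ i, IsAtomIn S (e i) := atomIn_of_range hre
    have htop : Finset.univ.sup e = ⊤ := sup_atoms_eq_top hS hfin hre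
    constructor
    · -- the sup is ⊤
      apply SubAlg.val_injective
      rw [SubAlg.val_finset_sup, SubAlg.val_top]
      apply eq_top_iff.2
      intro k _
      rw [Finset.sup_set_eq_biUnion, Set.mem_iUnion₂]
      by_contra hnone
      push_neg at hnone
      have hall : ∀ i : Fin n, ρ k.1 ⊓ e i = ⊥ := by
        intro i
        have := hnone i (Finset.mem_univ i)
        rw [hval, hf₀mem] at this
        exact not_not.1 this
      have : ρ k.1 ⊓ Finset.univ.sup e = ⊥ := by
        rw [Finset.sup_inf_distrib_left]
        exact le_bot_iff.1 (Finset.sup_le fun i _ => (hall i).le)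
      rw [htop, inf_top_eq] at this
      exact k.2 this
    · -- nonempty intersections
      intro J hJ hbot
      obtain ⟨j₀, hj₀⟩ := hJ
      set x : A := J.sup e with hxdef
      have hx : x ≠ ⊥ := by
        intro h
        exact (hat j₀).2.1 (le_bot_iff.1 (h ▸ Finset.le_sup hj₀))
      obtain ⟨k, hk⟩ := hρ x
      have hkX : ρ k ≠ ⊥ := by rw [hk]; exact hx
      have hmem1 : (⟨k, hkX⟩ : X) ∈ J.inf (fun j => f₀ (e j)) := by
        rw [Finset.inf_set_eq_iInter, Set.mem_iInter₂]
        intro j hj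
        show ρ k ⊓ e j ≠ ⊥
        rw [hk, inf_eq_right.2 (Finset.le_sup hj)]
        exact (hat j).2.1
      have hmem2 : (⟨k, hkX⟩ : X) ∈ Jᶜ.inf (fun j => (f₀ (e j))ᶜ) := by
        rw [Finset.inf_set_eq_iInter, Set.mem_iInter₂]
        intro j hj
        rw [Set.mem_compl_iff, hf₀mem, not_not, hk]
        apply le_bot_iff.1
        rw [Finset.sup_inf_distrib_right]
        apply Finset.sup_le
        intro i hi
        have hij : i ≠ j := fun h => (Finset.mem_compl.1 hj) (h ▸ hi)
        exact (atoms_disjoint hS he hre hij).le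
      have hval2 : (J.inf (fun i => f (e i)) ⊓
          Jᶜ.inf (fun i => (f (e i))ᶜ)).val =
          J.inf (fun j => f₀ (e j)) ⊓ Jᶜ.inf (fun j => (f₀ (e j))ᶜ) := by
        rw [SubAlg.val_inf, SubAlg.val_finset_inf, SubAlg.val_finset_inf]
        rfl
      have : (⟨k, hkX⟩ : X) ∈ (⊥ : B).val := by
        rw [← hbot, hval2]
        exact ⟨hmem1, hmem2⟩
      rw [SubAlg.val_bot] at this
      exact this
  · -- join-preserving
    intro a b
    apply Subtype.ext
    show f₀ (a ⊔ b) = f₀ a ⊔ f₀ b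
    ext k
    show ρ k.1 ⊓ (a ⊔ b) ≠ ⊥ ↔ k ∈ f₀ a ∪ f₀ b
    simp only [Set.mem_union, hf₀mem]
    rw [inf_sup_left, Ne, sup_eq_bot_iff]
    tauto
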